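/- Every partitioned Herbrand assembly P is projective in the category HAsm with respect to regular epimorphisms: for every regular epimorphism p : B → A in HAsm and every morphism u : P → A, there exists a morphism v : P → B with p ∘ v = u. -/

import Mathlib

open CategoryTheory Encodable Denumerable

namespace Herbrand

/-- Kleene application in Kleene's first pca `K₁`: `e · n`. -/
def kap (e n : ℕ) : Part ℕ := Nat.Partrec.Code.eval (ofNat Nat.Partrec.Code e) n

/-- `kapIn r n S` : `r · n` is defined and its value lies in `S`. -/
def kapIn (r n : ℕ) (S : Set ℕ) : Prop := ∃ v ∈ kap r n, v ∈ S

/-- The list coded by a natural number (canonical bijection `ℕ ≃ List ℕ`). -/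
def toL (n : ℕ) : List ℕ := ofNat (List ℕ) n

/-- The code of a list of natural numbers. -/
def ofL (l : List ℕ) : ℕ := encode l

@[simp] lemma toL_ofL (l : List ℕ) : toL (ofL l) = l := ofNat_encode l

/-- `!A` : the set of codes of lists all of whose entries lie in `A`. -/
def bang (A : Set ℕ) : Set ℕ := {n | ∀ x ∈ toL n, x ∈ A}

/-- `m ⪯ n` : every entry of the list coded by `m` is an entry of the list coded by `n`. -/
def sle (m n : ℕ) : Prop := ∀ x ∈ toL m, x ∈ toL n

lemma sle_refl (m : ℕ) : sle m m := fun _ hx => hx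

lemma sle_trans {m n k : ℕ} (h1 : sle m n) (h2 : sle n k) : sle m k :=
  fun x hx => h2 x (h1 x hx)

/-- `S` is upward closed in `!A`. -/
def UpwardClosedIn (A S : Set ℕ) : Prop :=
  ∀ m ∈ S, ∀ n ∈ bang A, sle m n → n ∈ S

/-- `↑_{!A} S` : the set of `n ∈ !A` with `m ⪯ n` for some `m ∈ S`. -/
def upClo (A S : Set ℕ) : Set ℕ := {n | n ∈ bang A ∧ ∃ m ∈ S, sle m n}

lemma mem_bang_univ (n : ℕ) : n ∈ bang Set.univ := fun x _ => Set.mem_univ x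

/-- From a partial recursive function we get a `K₁`-code for it. -/
theorem exists_kap_eq {f : ℕ →. ℕ} (hf : Nat.Partrec f) : ∃ e, ∀ n, kap e n = f n := by
  obtain ⟨c, hc⟩ := Nat.Partrec.Code.exists_code.mp hf
  exact ⟨encode c, fun n => by simp [kap, hc]⟩


/-- A Herbrand assembly over `K₁`. -/
structure HAsmObj where
  carrier : Type
  real : Set ℕ
  rz : carrier → Set ℕ
  rz_sub : ∀ a, rz a ⊆ bang real
  rz_ne : ∀ a, (rz a).Nonempty
  rz_up : ∀ a, UpwardClosedIn real (rz a)

/-- `r ∈ ℕ` tracks the function `f` between the underlying sets of two Herbrand assemblies. -/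
def Tracks (B A : HAsmObj) (f : B.carrier → A.carrier) (r : ℕ) : Prop :=
  (∀ m ∈ bang B.real, kapIn r m (bang A.real)) ∧
  ∀ b : B.carrier, ∀ m ∈ B.rz b, kapIn r m (A.rz (f b))

/-- A morphism of Herbrand assemblies: a tracked function. -/
structure HHom (B A : HAsmObj) where
  toFun : B.carrier → A.carrier
  tracked : ∃ r, Tracks B A toFun r

theorem HHom.ext' {B A : HAsmObj} {f g : HHom B A} (h : f.toFun = g.toFun) : f = g := by
  cases f; cases g; simpa using h

theorem tracks_id_fun (B A : HAsmObj) (f : B.carrier → A.carrier)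
    (h1 : ∀ m ∈ bang B.real, m ∈ bang A.real)
    (h2 : ∀ b : B.carrier, ∀ m ∈ B.rz b, m ∈ A.rz (f b)) : ∃ r, Tracks B A f r := by
  obtain ⟨e, he⟩ := exists_kap_eq (Nat.Partrec.of_primrec Nat.Primrec.id)
  exact ⟨e, fun m hm => ⟨m, by simp [he], h1 m hm⟩,
    fun b m hm => ⟨m, by simp [he], h2 b m hm⟩⟩

theorem tracked_id (A : HAsmObj) : ∃ r, Tracks A A id r :=
  tracks_id_fun A A id (fun _ h => h) (fun _ _ h => h)

theorem tracked_comp {C B A : HAsmObj} {f : C.carrier → B.carrier} {g : B.carrier → A.carrier}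
    (hf : ∃ r, Tracks C B f r) (hg : ∃ s, Tracks B A g s) : ∃ t, Tracks C A (g ∘ f) t := by
  obtain ⟨r, hr1, hr2⟩ := hf
  obtain ⟨s, hs1, hs2⟩ := hg
  refine ⟨encode (Nat.Partrec.Code.comp (ofNat Nat.Partrec.Code s) (ofNat Nat.Partrec.Code r)),
    ?_, ?_⟩
  · intro m hm
    obtain ⟨v, hv, hv'⟩ := hr1 m hm
    obtain ⟨w, hw, hw'⟩ := hs1 v hv'
    exact ⟨w, by simp only [kap, Denumerable.ofNat_encode, Nat.Partrec.Code.eval]; exact Part.mem_bind hv hw, hw'⟩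
  · intro c m hm
    obtain ⟨v, hv, hv'⟩ := hr2 c m hm
    obtain ⟨w, hw, hw'⟩ := hs2 (f c) v hv'
    exact ⟨w, by simp only [kap, Denumerable.ofNat_encode, Nat.Partrec.Code.eval]; exact Part.mem_bind hv hw, hw'⟩

/-- The category `HAsm` of Herbrand assemblies over `K₁`. -/
instance : Category HAsmObj where
  Hom B A := HHom B A
  id A := ⟨id, tracked_id A⟩
  comp f g := ⟨g.toFun ∘ f.toFun, tracked_comp f.tracked g.tracked⟩
  id_comp f := HHom.ext' rfl
  comp_id f := HHom.ext' rfl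
  assoc f g h := HHom.ext' rfl


/-- The Herbrand assembly `∇X = (X, ℕ, x ↦ !ℕ)`. -/
def nablaObj (X : Type) : HAsmObj where
  carrier := X
  real := Set.univ
  rz _ := bang Set.univ
  rz_sub _ := fun _ h => h
  rz_ne _ := ⟨0, mem_bang_univ 0⟩
  rz_up _ := fun _ _ n hn _ => hn

/-- The functor `∇ : Set → HAsm`. -/
def Nabla : Type ⥤ HAsmObj where
  obj := nablaObj
  map f := ⟨f, tracks_id_fun _ _ f (fun _ h => h) (fun _ _ h => h)⟩
  map_id _ := HHom.ext' rfl
  map_comp _ _ := HHom.ext' rfl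

/-- The underlying-set functor `Γ : HAsm → Set`. -/
def Gamma : HAsmObj ⥤ Type where
  obj A := A.carrier
  map f := TypeCat.ofHom f.toFun

/-- The realizability structure of the natural numbers object: `ν n = ↑_{!ℕ} {⟨n⟩}`. -/
def nuN (n : ℕ) : Set ℕ := upClo Set.univ {ofL [n]}

/-- The natural numbers object `N = (ℕ, ℕ, ν)` of `HAsm`. -/
def NObj : HAsmObj where
  carrier := ℕ
  real := Set.univ
  rz := nuN
  rz_sub _ := fun _ hm => hm.1
  rz_ne n := ⟨ofL [n], mem_bang_univ _, ofL [n], rfl, sle_refl _⟩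
  rz_up _ := fun m hm k hk hmk => ⟨hk, hm.2.choose, hm.2.choose_spec.1,
    sle_trans hm.2.choose_spec.2 hmk⟩

/-- The terminal object `1 = ({*}, ℕ, * ↦ !ℕ)` of `HAsm`. -/
def oneObj : HAsmObj := nablaObj PUnit

/-- The zero morphism `0 : 1 ⟶ N`. -/
def zeroH : oneObj ⟶ NObj := by
  refine ⟨fun _ => (0 : ℕ), ?_⟩
  obtain ⟨e, he⟩ := exists_kap_eq (Nat.Partrec.of_primrec (Nat.Primrec.const (ofL [0])))
  exact ⟨e, fun m _ => ⟨ofL [0], by simp [he], mem_bang_univ _⟩,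
    fun b m _ => ⟨ofL [0], by simp [he], mem_bang_univ _, ofL [0], rfl, sle_refl _⟩⟩

/-- The successor morphism `s : N ⟶ N`. -/
def succH : NObj ⟶ NObj := by
  refine ⟨(Nat.succ : ℕ → ℕ), ?_⟩
  have hp : Primrec (fun m : ℕ => ofL ((toL m).map Nat.succ)) :=
    Primrec.encode.comp ((Primrec.ofNat (List ℕ)).list_map
      ((Primrec.succ.comp Primrec.snd).to₂))
  obtain ⟨e, he⟩ := exists_kap_eq (Nat.Partrec.of_primrec (Primrec.nat_iff.mp hp))
  refine ⟨e, fun m _ => ⟨ofL ((toL m).map Nat.succ), by simp [he], mem_bang_univ _⟩, ?_⟩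
  rintro (n : ℕ) m hm
  refine ⟨ofL ((toL m).map Nat.succ), by simp [he], mem_bang_univ _, ofL [n + 1], rfl, ?_⟩
  intro x hx
  have hn : n ∈ toL m := hm.2.choose_spec.2 n (by
    have : hm.2.choose = ofL [n] := hm.2.choose_spec.1
    rw [this]; simp)
  have hx' : x = n + 1 := by simpa using hx
  subst hx'
  simp only [toL_ofL, List.mem_map]
  exact ⟨n, hn, rfl⟩


/-- A partitioned Herbrand assembly. -/
def Partitioned (A : HAsmObj) : Prop :=
  ∀ a : A.carrier, ∃ g : ℕ, A.rz a = upClo A.real {ofL [g]}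

/-! ### Auxiliary machinery for projectivity -/

theorem kap_partrec (e : ℕ) : Partrec (kap e) :=
  Partrec.nat_iff.mpr (Nat.Partrec.Code.exists_code.mpr ⟨ofNat Nat.Partrec.Code e, rfl⟩)

/-- `y ↦ r · (s · ⟨y⟩)`. -/
def Fh (s r : ℕ) : ℕ →. ℕ := fun y => (kap s (ofL [y])).bind (kap r)

theorem Fh_partrec (s r : ℕ) : Partrec (Fh s r) :=
  Partrec.bind
    ((kap_partrec s).comp
      ((Primrec.encode.comp (Primrec.list_cons.comp .id (.const []))).to_comp))
    ((kap_partrec r).comp Computable.snd)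

/-- Recursion computing the concatenation of `Fh s r y` over the first `k` entries of `toL m`. -/
def recT (s r m : ℕ) : ℕ → Part ℕ
  | 0 => Part.some (ofL [])
  | k + 1 => (recT s r m k).bind fun i =>
      (Fh s r ((toL m).getD k 0)).map fun w => ofL (toL i ++ toL w)

/-- `Th s r m` : concatenation of `r·(s·⟨y⟩)` over all entries `y` of the list coded by `m`. -/
def Th (s r : ℕ) : ℕ →. ℕ := fun m => recT s r m (toL m).length

theorem flatten_take_succ {α : Type*} (L : List (List α)) (k : ℕ) (hk : k < L.length) :
    (L.take (k + 1)).flatten = (L.take k).flatten ++ L[k] := by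
  rw [List.take_succ, List.getElem?_eq_getElem hk, Option.toList_some,
    List.flatten_append, List.flatten_cons, List.flatten_nil, List.append_nil]

theorem recT_spec (s r m : ℕ) (V : ℕ → ℕ) (hV : ∀ y ∈ toL m, V y ∈ Fh s r y) :
    ∀ k, k ≤ (toL m).length →
      ofL ((((toL m).take k).map fun y => toL (V y)).flatten) ∈ recT s r m k := by
  intro k
  induction k with
  | zero => intro _; simp [recT]
  | succ k ih =>
    intro hk
    have hk' : k < (toL m).length := hk
    have hmem : (toL m)[k] ∈ toL m := List.getElem_mem hk'
    have hgd : (toL m).getD k 0 = (toL m)[k] := List.getD_eq_getElem _ _ hk'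
    simp only [recT, hgd]
    refine Part.mem_bind_iff.mpr ⟨_, ih (le_of_lt hk'), ?_⟩
    refine (Part.mem_map_iff _).mpr ⟨V ((toL m)[k]), hV _ hmem, ?_⟩
    rw [toL_ofL]
    congr 1
    rw [List.map_take, List.map_take,
      flatten_take_succ _ k (by simpa using hk'), List.getElem_map]

theorem Th_partrec (s r : ℕ) : Nat.Partrec (Th s r) := by
  have hbase : Nat.Partrec (fun _ : ℕ => Part.some (ofL ([] : List ℕ))) :=
    Nat.Partrec.of_primrec (Nat.Primrec.const _)
  set idx : ℕ → ℕ := fun p => (toL p.unpair.1).getD p.unpair.2.unpair.1 0 with hidxdef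
  set comb : ℕ → ℕ → ℕ := fun p w => ofL (toL p.unpair.2.unpair.2 ++ toL w) with hcombdef
  have hidx : Computable idx := by
    exact ((Primrec.list_getD 0).comp
      ((Primrec.ofNat (List ℕ)).comp (Primrec.fst.comp Primrec.unpair))
      (Primrec.fst.comp (Primrec.unpair.comp (Primrec.snd.comp Primrec.unpair)))).to_comp
  have hcomb : Computable₂ comb := by
    exact (Primrec.encode.comp (Primrec.list_append.comp
      ((Primrec.ofNat (List ℕ)).comp
        (Primrec.snd.comp (Primrec.unpair.comp (Primrec.snd.comp (Primrec.unpair.comp .fst)))))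
      ((Primrec.ofNat (List ℕ)).comp Primrec.snd))).to_comp
  have hg : Partrec (fun p : ℕ => (Fh s r (idx p)).map (comb p)) :=
    Partrec.map ((Fh_partrec s r).comp hidx) hcomb
  have hprec := Nat.Partrec.prec hbase (Partrec.nat_iff.mp hg)
  have heq : ∀ m k : ℕ, (Nat.unpaired (fun a n =>
      Nat.rec (motive := fun _ => Part ℕ) (Part.some (ofL ([] : List ℕ)))
        (fun y IH => IH >>= fun i =>
          (Fh s r (idx (Nat.pair a (Nat.pair y i)))).map
            (comb (Nat.pair a (Nat.pair y i)))) n) : ℕ →. ℕ) (Nat.pair m k)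
      = recT s r m k := by
    intro m k
    induction k with
    | zero => simp [Nat.unpaired, recT]
    | succ k ih =>
      simp only [Nat.unpaired, Nat.unpair_pair] at ih ⊢
      rw [recT, ← ih]
      simp [hidxdef, hcombdef, Nat.unpair_pair]
  have hpl : Computable (fun m : ℕ => Nat.pair m (toL m).length) :=
    (Primrec₂.natPair.comp .id (Primrec.list_length.comp (Primrec.ofNat (List ℕ)))).to_comp
  have hfinal := ((Partrec.nat_iff.mpr hprec).comp hpl).of_eq
    (fun m => heq m (toL m).length)
  exact Partrec.nat_iff.mp hfinal

theorem mem_bang_singleton {A : Set ℕ} {y : ℕ} (hy : y ∈ A) : ofL [y] ∈ bang A := by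
  intro x hx
  simp only [toL_ofL, List.mem_singleton] at hx
  subst hx; exact hy

theorem epi_surjective {B A : HAsmObj} (p : B ⟶ A) [Epi p] :
    Function.Surjective (HHom.toFun p) := by
  let χ₁ : A ⟶ nablaObj Prop :=
    ⟨fun a => ∃ b, HHom.toFun p b = a,
      tracks_id_fun _ _ _ (fun m _ => mem_bang_univ m) (fun _ m _ => mem_bang_univ m)⟩
  let χ₂ : A ⟶ nablaObj Prop :=
    ⟨fun _ => True,
      tracks_id_fun _ _ _ (fun m _ => mem_bang_univ m) (fun _ m _ => mem_bang_univ m)⟩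
  have hcomp : p ≫ χ₁ = p ≫ χ₂ :=
    HHom.ext' (funext fun b => eq_true ⟨b, rfl⟩)
  have hχ : χ₁ = χ₂ := (cancel_epi p).mp hcomp
  intro a
  have := congrFun (congrArg HHom.toFun hχ) a
  exact of_eq_true this

/-- The "fiber image" assembly: carrier `A`, realized over `ℬ` by realizers of elements of
the fibers of `p`. -/
def fiberObj {B A : HAsmObj} (p : B ⟶ A) (hsurj : Function.Surjective (HHom.toFun p)) :
    HAsmObj where
  carrier := A.carrier
  real := B.real
  rz a := upClo B.real {n | ∃ b, HHom.toFun p b = a ∧ n ∈ B.rz b}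
  rz_sub _ := fun _ hn => hn.1
  rz_ne a := by
    obtain ⟨b, hb⟩ := hsurj a
    obtain ⟨n, hn⟩ := B.rz_ne b
    exact ⟨n, B.rz_sub b hn, n, ⟨b, hb, hn⟩, sle_refl n⟩
  rz_up _ := fun m hm k hk hmk =>
    ⟨hk, hm.2.choose, hm.2.choose_spec.1, sle_trans hm.2.choose_spec.2 hmk⟩


/-- partitioned Herbrand assemblies are projective with respect to regular
epimorphisms in `HAsm`. -/
theorem partitioned_projective (P : HAsmObj) (hP : Partitioned P)
    {B A : HAsmObj} (p : B ⟶ A) (_ : RegularEpi p) (u : P ⟶ A) :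
    ∃ v : P ⟶ B, v ≫ p = u := by
  rename_i hreg
  haveI := RegularEpi.epi p hreg
  have hsurj : Function.Surjective (HHom.toFun p) := epi_surjective p
  -- the quotient-type object and the comparison map
  let D := fiberObj p hsurj
  let q : B ⟶ D := ⟨@HHom.toFun B A p, tracks_id_fun B D (@HHom.toFun B A p)
    (fun _ hm => hm)
    (fun b m hm => ⟨B.rz_sub b hm, m, ⟨b, rfl, hm⟩, sle_refl m⟩)⟩
  have hw : hreg.left ≫ q = hreg.right ≫ q := by
    apply HHom.ext'
    have := congrArg HHom.toFun hreg.w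
    exact this
  let h : A ⟶ D := Limits.Cofork.IsColimit.desc hreg.isColimit q hw
  have hfac : p ≫ h = q := Limits.Cofork.IsColimit.π_desc hreg.isColimit
  have hid : ∀ a : A.carrier, HHom.toFun h a = a := by
    intro a
    obtain ⟨b, rfl⟩ := hsurj a
    exact congrFun (congrArg HHom.toFun hfac) b
  obtain ⟨s, hs1, hs2⟩ := u.tracked
  obtain ⟨r, hr1, hr2'⟩ := h.tracked
  have hr2 : ∀ a : A.carrier, ∀ m ∈ A.rz a, kapIn r m (D.rz a) := by
    intro a m hm
    have := hr2' a m hm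
    rwa [hid a] at this
  -- values of Fh on realizers
  have hFval : ∀ y ∈ P.real, ∃ w ∈ Fh s r y, w ∈ bang B.real := by
    intro y hy
    obtain ⟨sv, hsv, hsv'⟩ := hs1 (ofL [y]) (mem_bang_singleton hy)
    obtain ⟨rv, hrv, hrv'⟩ := hr1 sv hsv'
    exact ⟨rv, Part.mem_bind_iff.mpr ⟨sv, hsv, hrv⟩, hrv'⟩
  classical
  set V : ℕ → ℕ := fun y => if hd : (Fh s r y).Dom then (Fh s r y).get hd else 0 with hVdef
  have hV : ∀ y ∈ P.real, V y ∈ Fh s r y := by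
    intro y hy
    obtain ⟨w, hw, _⟩ := hFval y hy
    have hd : (Fh s r y).Dom := Part.dom_iff_mem.mpr ⟨w, hw⟩
    simp only [hVdef, dif_pos hd]
    exact Part.get_mem hd
  have hVreal : ∀ y ∈ P.real, V y ∈ bang B.real := by
    intro y hy
    obtain ⟨w, hw, hw'⟩ := hFval y hy
    rwa [Part.mem_unique (hV y hy) hw]
  -- the canonical value of Th on a realizer
  set wm : ℕ → ℕ := fun m => ofL (((toL m).map fun y => toL (V y)).flatten) with hwmdef
  have hT : ∀ m ∈ bang P.real, wm m ∈ Th s r m := by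
    intro m hm
    have := recT_spec s r m V (fun y hy => hV y (hm y hy)) (toL m).length le_rfl
    simpa [Th, hwmdef] using this
  have hTreal : ∀ m ∈ bang P.real, wm m ∈ bang B.real := by
    intro m hm x hx
    simp only [hwmdef, toL_ofL, List.mem_flatten, List.mem_map] at hx
    obtain ⟨_, ⟨y, hy, rfl⟩, hx⟩ := hx
    exact hVreal y (hm y hy) x hx
  -- choose a lift elementwise
  have key : ∀ x : P.carrier, ∃ b : B.carrier, HHom.toFun p b = HHom.toFun u x ∧
      ∀ m ∈ P.rz x, wm m ∈ B.rz b := by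
    intro x
    obtain ⟨gx, hgx⟩ := hP x
    have hg_real : gx ∈ P.real := by
      obtain ⟨n, hn⟩ := P.rz_ne x
      rw [hgx] at hn
      obtain ⟨hnb, m0, hm0, hsle⟩ := hn
      have : gx ∈ toL n := by
        apply hsle
        rw [Set.mem_singleton_iff] at hm0
        simp [hm0]
      exact hnb gx this
    have hgm : ofL [gx] ∈ P.rz x := by
      rw [hgx]
      exact ⟨mem_bang_singleton hg_real, ofL [gx], rfl, sle_refl _⟩
    obtain ⟨sv, hsv, hsv'⟩ := hs2 x _ hgm
    obtain ⟨rv, hrv, hrv'⟩ := hr2 (HHom.toFun u x) sv hsv'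
    obtain ⟨hrvb, m0, ⟨b, hpb, hm0B⟩, hsleb⟩ := hrv'
    have hbrz : rv ∈ B.rz b := B.rz_up b m0 hm0B rv hrvb hsleb
    have hrvF : rv ∈ Fh s r gx := Part.mem_bind_iff.mpr ⟨sv, hsv, hrv⟩
    have hVgx : V gx = rv := Part.mem_unique (hV gx hg_real) hrvF
    refine ⟨b, hpb, ?_⟩
    intro m hm
    have hmbang : m ∈ bang P.real := P.rz_sub x hm
    have hgxm : gx ∈ toL m := by
      rw [hgx] at hm
      obtain ⟨_, m0', hm0', hsle'⟩ := hm
      apply hsle'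
      rw [Set.mem_singleton_iff] at hm0'
      simp [hm0']
    have hslew : sle rv (wm m) := by
      intro z hz
      simp only [hwmdef, toL_ofL, List.mem_flatten, List.mem_map]
      exact ⟨toL (V gx), ⟨gx, hgxm, rfl⟩, by rwa [hVgx]⟩
    exact B.rz_up b rv hbrz (wm m) (hTreal m hmbang) hslew
  choose vf hvf1 hvf2 using key
  obtain ⟨e, he⟩ := exists_kap_eq (Th_partrec s r)
  refine ⟨⟨vf, e, ?_, ?_⟩, HHom.ext' (funext fun x => hvf1 x)⟩
  · intro m hm
    exact ⟨wm m, by rw [he]; exact hT m hm, hTreal m hm⟩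
  · intro x m hm
    exact ⟨wm m, by rw [he]; exact hT m (P.rz_sub x hm), hvf2 x m hm⟩


end Herbrand
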